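/- Let w : [0,T) → ℝ be C¹ with T < ∞, N > 0, satisfying -w² - N ≤ w'(t) ≤ -w² + N on [0,T) and lim_{t→T⁻} w(t) = -∞. Then lim_{t→T⁻} w(t)(T - t) = -1. -/

import Mathlib

open Filter Set Topology

theorem blowup_rate_muDP
    (T N : ℝ) (hT : 0 < T) (hN : 0 < N)
    (w w' : ℝ → ℝ)
    (hderiv : ∀ t ∈ Set.Ico (0:ℝ) T, HasDerivAt w (w' t) t)
    (hcont : ContinuousOn w' (Set.Ico (0:ℝ) T))
    (hlow : ∀ t ∈ Set.Ico (0:ℝ) T, -(w t) ^ 2 - N ≤ w' t)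
    (hup : ∀ t ∈ Set.Ico (0:ℝ) T, w' t ≤ -(w t) ^ 2 + N)
    (hblow : Filter.Tendsto w (nhdsWithin T (Set.Iio T)) Filter.atBot) :
    Filter.Tendsto (fun t => w t * (T - t)) (nhdsWithin T (Set.Iio T))
      (nhds (-1)) := by
  rw [Metric.tendsto_nhds]
  intro δ hδ
  obtain ⟨ε, hε, hε2, hεδ⟩ : ∃ ε : ℝ, 0 < ε ∧ ε ≤ 1/2 ∧ 2 * ε < δ := by
    refine ⟨min (δ/3) (1/2), lt_min (by linarith) (by norm_num), min_le_right _ _, ?_⟩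
    have := min_le_left (δ/3) (1/2); linarith
  obtain ⟨M, hM, hNM⟩ : ∃ M : ℝ, 0 < M ∧ N ≤ ε * M^2 := by
    refine ⟨Real.sqrt (N/ε) + 1, by positivity, ?_⟩
    have h1 : Real.sqrt (N/ε) ^ 2 = N/ε := Real.sq_sqrt (by positivity)
    have h2 : (N/ε) ≤ (Real.sqrt (N/ε) + 1)^2 := by nlinarith [Real.sqrt_nonneg (N/ε)]
    have h3 : ε * (N/ε) ≤ ε * (Real.sqrt (N/ε) + 1)^2 := by nlinarith
    calc N = ε * (N/ε) := by field_simp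
    _ ≤ ε * (Real.sqrt (N/ε) + 1)^2 := h3
  have hev : ∀ᶠ t in 𝓝[<] T, w t < -M := hblow.eventually (eventually_lt_atBot (-M))
  obtain ⟨a, ha, haw⟩ := mem_nhdsLT_iff_exists_Ioo_subset.mp hev
  rw [Set.mem_Iio] at ha
  obtain ⟨t₀, ht₀T, ht₀0, ht₀a⟩ : ∃ t₀ : ℝ, t₀ < T ∧ 0 ≤ t₀ ∧ a < t₀ :=
    ⟨max ((a+T)/2) 0, max_lt (by linarith) hT, le_max_right _ _,
      lt_of_lt_of_le (by linarith) (le_max_left _ _)⟩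
  have hsub : Ico t₀ T ⊆ Ico 0 T := fun t ht => ⟨le_trans ht₀0 ht.1, ht.2⟩
  have hwM : ∀ t ∈ Ico t₀ T, w t < -M := fun t ht => haw ⟨lt_of_lt_of_le ht₀a ht.1, ht.2⟩
  have hwne : ∀ t ∈ Ico t₀ T, w t ≠ 0 := fun t ht => ne_of_lt (by have := hwM t ht; linarith)
  obtain ⟨v, hvdef⟩ : ∃ v : ℝ → ℝ, v = fun t => -(w t)⁻¹ := ⟨_, rfl⟩
  have hv' : ∀ t ∈ Ico t₀ T, HasDerivAt v (w' t / (w t)^2) t := by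
    intro t ht
    have hw := hderiv t (hsub ht)
    have h := (hw.inv (hwne t ht)).neg
    rw [hvdef]
    convert h using 1
    all_goals first | rfl | ring
  have hderivbound : ∀ t ∈ Ioo t₀ T, -(1+ε) ≤ w' t / (w t)^2 ∧ w' t / (w t)^2 ≤ -(1-ε) := by
    intro t ht
    have ht' : t ∈ Ico t₀ T := ⟨ht.1.le, ht.2⟩
    have hw := hwM t ht'
    have hw2 : M^2 ≤ (w t)^2 := by nlinarith
    have hsq : 0 < (w t)^2 := by nlinarith
    have hl := hlow t (hsub ht')
    have hu := hup t (hsub ht')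
    have hεM : ε * M^2 ≤ ε * (w t)^2 := by nlinarith
    constructor
    · rw [le_div_iff₀ hsq]; nlinarith
    · rw [div_le_iff₀ hsq]; nlinarith
  have hconv : Convex ℝ (Ico t₀ T) := convex_Ico _ _
  have hcontv : ContinuousOn v (Ico t₀ T) := fun t ht =>
    (hv' t ht).continuousAt.continuousWithinAt
  have hintr : interior (Ico t₀ T) = Ioo t₀ T := interior_Ico
  have hdiffv : DifferentiableOn ℝ v (interior (Ico t₀ T)) := by
    rw [hintr]; intro t ht
    exact (hv' t ⟨ht.1.le, ht.2⟩).differentiableAt.differentiableWithinAt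
  have hderiv_le : ∀ x ∈ interior (Ico t₀ T), deriv v x ≤ -(1-ε) := by
    rw [hintr]; intro x hx
    rw [(hv' x ⟨hx.1.le, hx.2⟩).deriv]
    exact (hderivbound x hx).2
  have hderiv_ge : ∀ x ∈ interior (Ico t₀ T), -(1+ε) ≤ deriv v x := by
    rw [hintr]; intro x hx
    rw [(hv' x ⟨hx.1.le, hx.2⟩).deriv]
    exact (hderivbound x hx).1
  have hMVTle : ∀ t ∈ Ico t₀ T, ∀ y ∈ Ico t₀ T, t ≤ y → v y - v t ≤ (-(1-ε))*(y-t) :=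
    fun t ht y hy hty =>
      hconv.image_sub_le_mul_sub_of_deriv_le hcontv hdiffv hderiv_le t ht y hy hty
  have hMVTge : ∀ t ∈ Ico t₀ T, ∀ y ∈ Ico t₀ T, t ≤ y → (-(1+ε))*(y-t) ≤ v y - v t :=
    fun t ht y hy hty =>
      hconv.mul_sub_le_image_sub_of_le_deriv hcontv hdiffv hderiv_ge t ht y hy hty
  have hv0 : Tendsto v (𝓝[<] T) (nhds 0) := by
    have hneg : Tendsto (fun t => -(w t)) (𝓝[<] T) atTop := tendsto_neg_atBot_atTop.comp hblow
    have h : Tendsto (fun t => (-(w t))⁻¹) (𝓝[<] T) (𝓝 (0:ℝ)) := tendsto_inv_atTop_zero.comp hneg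
    exact h.congr fun t => by rw [hvdef]; simp [inv_neg]
  have hvbound : ∀ t ∈ Ioo t₀ T, (1-ε)*(T-t) ≤ v t ∧ v t ≤ (1+ε)*(T-t) := by
    intro t ht
    have ht' : t ∈ Ico t₀ T := ⟨ht.1.le, ht.2⟩
    have hmem : Ioo t T ∈ 𝓝[<] T := Ioo_mem_nhdsLT ht.2
    have h1 : Tendsto (fun y => v y - v t) (𝓝[<] T) (nhds (0 - v t)) := hv0.sub_const (v t)
    have h2 : Tendsto (fun y => (-(1-ε))*(y-t)) (𝓝[<] T) (nhds ((-(1-ε))*(T-t))) :=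
      ((continuous_const.mul (continuous_id.sub continuous_const)).tendsto T).mono_left
        nhdsWithin_le_nhds
    have h3 : Tendsto (fun y => (-(1+ε))*(y-t)) (𝓝[<] T) (nhds ((-(1+ε))*(T-t))) :=
      ((continuous_const.mul (continuous_id.sub continuous_const)).tendsto T).mono_left
        nhdsWithin_le_nhds
    have hup' : 0 - v t ≤ (-(1-ε))*(T-t) := by
      refine le_of_tendsto_of_tendsto h1 h2 ?_
      filter_upwards [hmem] with y hy
      exact hMVTle t ht' y ⟨le_trans ht'.1 hy.1.le, hy.2⟩ hy.1.le
    have hlo' : (-(1+ε))*(T-t) ≤ 0 - v t := by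
      refine le_of_tendsto_of_tendsto h3 h1 ?_
      filter_upwards [hmem] with y hy
      exact hMVTge t ht' y ⟨le_trans ht'.1 hy.1.le, hy.2⟩ hy.1.le
    constructor <;> nlinarith
  filter_upwards [Ioo_mem_nhdsLT ht₀T] with t ht
  obtain ⟨hb1, hb2⟩ := hvbound t ht
  have hp : 0 < T - t := by linarith [ht.2]
  have hwt := hwM t ⟨ht.1.le, ht.2⟩
  have hwv : w t * v t = -1 := by
    have hne := hwne t ⟨ht.1.le, ht.2⟩
    rw [hvdef]
    simp only [mul_neg, mul_inv_cancel₀ hne]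
  have hu : 0 < v t := by nlinarith
  have hXu : w t * (T - t) * v t = -(T - t) := by
    have : w t * (T - t) * v t = (w t * v t) * (T - t) := by ring
    rw [this, hwv]; ring
  rw [Real.dist_eq]
  have habs : w t * (T - t) - (-1) = w t * (T - t) + 1 := by ring
  rw [habs, abs_lt]
  have k1 : (w t * (T - t) + 1) * v t = v t - (T - t) := by
    rw [add_mul, one_mul, hXu]; ring
  have kε : ε < δ * (1 - ε) := by nlinarith [mul_le_mul_of_nonneg_left hε2 hδ.le]
  have k3 : ε * (T - t) < δ * v t := by
    have h5 : δ * ((1 - ε) * (T - t)) ≤ δ * v t := mul_le_mul_of_nonneg_left hb1 hδ.le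
    nlinarith [mul_lt_mul_of_pos_right kε hp]
  constructor
  · rw [← mul_lt_mul_iff_left₀ hu, k1]
    linarith
  · rw [← mul_lt_mul_iff_left₀ hu, k1]
    linarith
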